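/- For any r > 0 and any collection W of vectors in R^d satisfying: every w in W has norm 2r, and for distinct w, w' in W, |<w, w'>| < 2r^2, the sets A_w = {x in R^d : there exists a nonzero integer z with |x - z*w| < r} are pairwise disjoint as w ranges over W. -/

import Mathlib

/-- For any r > 0 and any collection W of vectors in ℝ^d with every w ∈ W of norm 2r and
|⟨w,u⟩| < 2r² for distinct w, u ∈ W, the sets
A_w = {x : ∃ nonzero integer z, |x - z w| < r} are pairwise disjoint. -/
theorem balls_around_multiples_disjoint (d : ℕ) (r : ℝ) (hr : 0 < r)
    (W : Set (EuclideanSpace ℝ (Fin d)))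
    (hnorm : ∀ w ∈ W, ‖w‖ = 2 * r)
    (hip : ∀ w ∈ W, ∀ u ∈ W, w ≠ u → |(inner ℝ w u : ℝ)| < 2 * r^2) :
    ∀ w ∈ W, ∀ u ∈ W, w ≠ u →
      Disjoint {x : EuclideanSpace ℝ (Fin d) | ∃ z : ℤ, z ≠ 0 ∧ ‖x - (z : ℝ) • w‖ < r}
               {x : EuclideanSpace ℝ (Fin d) | ∃ z : ℤ, z ≠ 0 ∧ ‖x - (z : ℝ) • u‖ < r} := by
  intro w hw u hu hwu
  rw [Set.disjoint_left]
  rintro x ⟨z₁, hz₁, h1⟩ ⟨z₂, hz₂, h2⟩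
  have hW : ‖w‖ = 2 * r := hnorm w hw
  have hU : ‖u‖ = 2 * r := hnorm u hu
  have hIP : |(inner ℝ w u : ℝ)| < 2 * r ^ 2 := hip w hw u hu hwu
  have htri : ‖(z₁ : ℝ) • w - (z₂ : ℝ) • u‖ < 2 * r := by
    calc ‖(z₁ : ℝ) • w - (z₂ : ℝ) • u‖
        ≤ ‖x - (z₁ : ℝ) • w‖ + ‖x - (z₂ : ℝ) • u‖ := by
          have := norm_sub_le (x - (z₁ : ℝ) • w) (x - (z₂ : ℝ) • u)
          simpa [sub_sub_sub_cancel_left, norm_sub_rev] using this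
      _ < 2 * r := by linarith
  have hsq : ‖(z₁ : ℝ) • w - (z₂ : ℝ) • u‖ ^ 2
      = (z₁ : ℝ) ^ 2 * (2 * r) ^ 2 - 2 * ((z₁ : ℝ) * (z₂ : ℝ) * (inner ℝ w u : ℝ))
        + (z₂ : ℝ) ^ 2 * (2 * r) ^ 2 := by
    rw [norm_sub_sq_real, real_inner_smul_left, real_inner_smul_right,
      norm_smul, norm_smul, hW, hU]
    have h1 : (‖(z₁ : ℝ)‖) ^ 2 = (z₁ : ℝ) ^ 2 := by
      rw [Real.norm_eq_abs, sq_abs]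
    have h2 : (‖(z₂ : ℝ)‖) ^ 2 = (z₂ : ℝ) ^ 2 := by
      rw [Real.norm_eq_abs, sq_abs]
    ring_nf
    nlinarith [h1, h2]
  have ha1 : (1 : ℝ) ≤ |(z₁ : ℝ)| := by
    have h : (1 : ℤ) ≤ |z₁| := Int.one_le_abs hz₁
    calc (1:ℝ) ≤ ((|z₁| : ℤ) : ℝ) := by exact_mod_cast h
      _ = |(z₁ : ℝ)| := by push_cast; ring
  have ha2 : (1 : ℝ) ≤ |(z₂ : ℝ)| := by
    have h : (1 : ℤ) ≤ |z₂| := Int.one_le_abs hz₂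
    calc (1:ℝ) ≤ ((|z₂| : ℤ) : ℝ) := by exact_mod_cast h
      _ = |(z₂ : ℝ)| := by push_cast; ring
  have hsqnn : (0 : ℝ) ≤ ‖(z₁ : ℝ) • w - (z₂ : ℝ) • u‖ := norm_nonneg _
  have hlt : ‖(z₁ : ℝ) • w - (z₂ : ℝ) • u‖ ^ 2 < (2 * r) ^ 2 := by
    nlinarith
  -- Now derive contradiction
  have habsmul : (1 : ℝ) ≤ |(z₁ : ℝ) * (z₂ : ℝ)| := by
    rw [abs_mul]; nlinarith [abs_nonneg (z₁ : ℝ), abs_nonneg (z₂ : ℝ)]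
  have hbound : 2 * ((z₁ : ℝ) * (z₂ : ℝ) * (inner ℝ w u : ℝ))
      ≤ 2 * |(z₁ : ℝ) * (z₂ : ℝ)| * (2 * r ^ 2) := by
    calc 2 * ((z₁ : ℝ) * (z₂ : ℝ) * (inner ℝ w u : ℝ))
        ≤ 2 * |(z₁ : ℝ) * (z₂ : ℝ) * (inner ℝ w u : ℝ)| := by
          nlinarith [le_abs_self ((z₁ : ℝ) * (z₂ : ℝ) * (inner ℝ w u : ℝ))]
      _ ≤ 2 * |(z₁ : ℝ) * (z₂ : ℝ)| * (2 * r ^ 2) := by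
          rw [abs_mul]
          nlinarith [abs_nonneg ((z₁ : ℝ) * (z₂ : ℝ)), abs_nonneg ((inner ℝ w u : ℝ)),
            hIP.le]
  have hsum : 2 * |(z₁ : ℝ) * (z₂ : ℝ)| ≤ (z₁ : ℝ) ^ 2 + (z₂ : ℝ) ^ 2 := by
    rw [abs_mul]
    nlinarith [sq_nonneg (|(z₁ : ℝ)| - |(z₂ : ℝ)|), sq_abs (z₁ : ℝ), sq_abs (z₂ : ℝ)]
  nlinarith [sq_nonneg r, habsmul, hsq, hlt, hbound, hsum]
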